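/- The von Neumann entropy of the thermal state, β ↦ S(ρ_β), is strictly decreasing in β on (0,∞) whenever H is not proportional to the identity; consequently, for any value s strictly between the minimum entropy value ln(multiplicity of ground state) and ln(dim H), there is a unique β with S(ρ_β) = s (existence and uniqueness of the observational temperature). -/

import Mathlib

open Real

/-- Partition function of a Hamiltonian with eigenvalues `E`. -/
noncomputable def Zfun {n : ℕ} (E : Fin n → ℝ) (β : ℝ) : ℝ :=
  ∑ i, Real.exp (-β * E i)

/-- Gibbs-state eigenvalue (probability of level `i`). -/
noncomputable def gibbsProb {n : ℕ} (E : Fin n → ℝ) (β : ℝ) (i : Fin n) : ℝ :=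
  Real.exp (-β * E i) / Zfun E β

/-- Von Neumann entropy of the thermal state `ρ_β`, through its spectrum. -/
noncomputable def gibbsEntropy {n : ℕ} (E : Fin n → ℝ) (β : ℝ) : ℝ :=
  -∑ i, gibbsProb E β i * Real.log (gibbsProb E β i)

/-- Degeneracy (multiplicity) of the ground state of `E`. -/
noncomputable def groundMult {n : ℕ} (E : Fin n → ℝ) : ℕ :=
  {i | ∀ j, E i ≤ E j}.toFinite.toFinset.card

open Filter

noncomputable def Wfun {n : ℕ} (E : Fin n → ℝ) (β : ℝ) : ℝ :=
  ∑ i, E i * Real.exp (-β * E i)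

noncomputable def Qfun {n : ℕ} (E : Fin n → ℝ) (β : ℝ) : ℝ :=
  ∑ i, (E i)^2 * Real.exp (-β * E i)

lemma Zpos {n : ℕ} (hn : 0 < n) (E : Fin n → ℝ) (β : ℝ) : 0 < Zfun E β := by
  have : Nonempty (Fin n) := Fin.pos_iff_nonempty.mp hn
  exact Finset.sum_pos (fun i _ => Real.exp_pos _) Finset.univ_nonempty

lemma entropy_eq {n : ℕ} (hn : 0 < n) (E : Fin n → ℝ) (β : ℝ) :
    gibbsEntropy E β = Real.log (Zfun E β) + β * (Wfun E β / Zfun E β) := by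
  have hZ := Zpos hn E β
  have h1 : ∀ i : Fin n, gibbsProb E β i * Real.log (gibbsProb E β i)
      = (Real.exp (-β * E i) / Zfun E β) * (-β * E i - Real.log (Zfun E β)) := by
    intro i
    simp [gibbsProb, Real.log_div (Real.exp_ne_zero _) hZ.ne', Real.log_exp]
  have hsum : ∑ i, Real.exp (-β * E i) = Zfun E β := rfl
  simp only [gibbsEntropy, h1, div_mul_eq_mul_div]
  rw [← Finset.sum_div]
  have key : (∑ i, Real.exp (-β * E i) * (-β * E i - Real.log (Zfun E β)))
      = -(β * Wfun E β) - Real.log (Zfun E β) * Zfun E β := by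
    simp only [Wfun, Zfun, Finset.mul_sum, ← Finset.sum_neg_distrib, ← Finset.sum_sub_distrib]
    apply Finset.sum_congr rfl
    intro i _
    ring
  rw [key]
  field_simp
  ring
lemma hasDerivAt_Zfun {n : ℕ} (E : Fin n → ℝ) (β : ℝ) :
    HasDerivAt (Zfun E) (-(Wfun E β)) β := by
  have h : ∀ i ∈ Finset.univ, HasDerivAt (fun b : ℝ => Real.exp (-b * E i))
      (-(E i * Real.exp (-β * E i))) β := by
    intro i _
    have h1 : HasDerivAt (fun b : ℝ => -b * E i) (-(E i)) β := by
      simpa using ((hasDerivAt_id β).neg.mul_const (E i))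
    simpa [mul_comm] using h1.exp
  refine (HasDerivAt.fun_sum h).congr_deriv ?_
  simp [Wfun, Finset.sum_neg_distrib]

lemma hasDerivAt_Wfun {n : ℕ} (E : Fin n → ℝ) (β : ℝ) :
    HasDerivAt (Wfun E) (-(Qfun E β)) β := by
  have h : ∀ i ∈ Finset.univ, HasDerivAt (fun b : ℝ => E i * Real.exp (-b * E i))
      (-((E i)^2 * Real.exp (-β * E i))) β := by
    intro i _
    have h1 : HasDerivAt (fun b : ℝ => -b * E i) (-(E i)) β := by
      simpa using ((hasDerivAt_id β).neg.mul_const (E i))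
    have := (h1.exp).const_mul (E i)
    refine this.congr_deriv ?_
    ring
  refine (HasDerivAt.fun_sum h).congr_deriv ?_
  simp [Qfun, Finset.sum_neg_distrib]

lemma hasDerivAt_entropy {n : ℕ} (hn : 0 < n) (E : Fin n → ℝ) (β : ℝ) :
    HasDerivAt (gibbsEntropy E)
      (β * ((Wfun E β)^2 - Qfun E β * Zfun E β) / (Zfun E β)^2) β := by
  have hZ := Zpos hn E β
  have hfun : gibbsEntropy E = fun b => Real.log (Zfun E b) + b * (Wfun E b / Zfun E b) := by
    funext b; exact entropy_eq hn E b
  rw [hfun]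
  have hZ' := hasDerivAt_Zfun E β
  have hW' := hasDerivAt_Wfun E β
  have hdiv : HasDerivAt (fun b => Wfun E b / Zfun E b)
      ((-(Qfun E β) * Zfun E β - Wfun E β * (-(Wfun E β))) / (Zfun E β)^2) β :=
    hW'.div hZ' hZ.ne'
  have hmul := (hasDerivAt_id β).mul hdiv
  have hlog := hZ'.log hZ.ne'
  have := hlog.add hmul
  refine this.congr_deriv ?_
  field_simp
  simp only [id]
  ring

lemma var_pos {n : ℕ} (E : Fin n → ℝ) (hE : ∃ i j, E i ≠ E j) (β : ℝ) :
    (Wfun E β)^2 < Qfun E β * Zfun E β := by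
  have expand : ∀ i : Fin n,
      ∑ j, (E i - E j)^2 * (Real.exp (-β * E i) * Real.exp (-β * E j))
      = (E i)^2 * Real.exp (-β * E i) * Zfun E β
        - 2 * (E i * Real.exp (-β * E i)) * Wfun E β
        + Real.exp (-β * E i) * Qfun E β := by
    intro i
    simp only [Zfun, Wfun, Qfun, Finset.mul_sum, ← Finset.sum_add_distrib,
      ← Finset.sum_sub_distrib]
    apply Finset.sum_congr rfl
    intro j _
    ring
  have total : ∑ i, ∑ j, (E i - E j)^2 * (Real.exp (-β * E i) * Real.exp (-β * E j))
      = 2 * (Qfun E β * Zfun E β - (Wfun E β)^2) := by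
    simp only [expand, Finset.sum_sub_distrib, Finset.sum_add_distrib, ← Finset.sum_mul]
    have hq : (∑ i, (E i)^2 * Real.exp (-β * E i)) = Qfun E β := rfl
    have hw : (∑ i, 2 * (E i * Real.exp (-β * E i))) = 2 * Wfun E β := by
      rw [Wfun, Finset.mul_sum]
    have hz : (∑ i, Real.exp (-β * E i)) = Zfun E β := rfl
    rw [hq, hw, hz]
    ring
  have hpos : 0 < ∑ i, ∑ j, (E i - E j)^2 * (Real.exp (-β * E i) * Real.exp (-β * E j)) := by
    obtain ⟨i₀, j₀, hij⟩ := hE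
    have hterm : ∀ i j : Fin n,
        0 ≤ (E i - E j)^2 * (Real.exp (-β * E i) * Real.exp (-β * E j)) := by
      intro i j; positivity
    refine Finset.sum_pos' (fun i _ => Finset.sum_nonneg fun j _ => hterm i j)
      ⟨i₀, Finset.mem_univ _, Finset.sum_pos' (fun j _ => hterm i₀ j)
        ⟨j₀, Finset.mem_univ _, ?_⟩⟩
    have h0 : E i₀ - E j₀ ≠ 0 := sub_ne_zero.mpr hij
    positivity
  linarith [total ▸ hpos]

lemma entropy_strictAnti {n : ℕ} (hn : 0 < n) (E : Fin n → ℝ) (hE : ∃ i j, E i ≠ E j) :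
    StrictAntiOn (gibbsEntropy E) (Set.Ioi 0) := by
  apply strictAntiOn_of_deriv_neg (convex_Ioi 0)
  · exact fun x _ => (hasDerivAt_entropy hn E x).differentiableAt.continuousAt.continuousWithinAt
  · intro x hx
    rw [interior_Ioi] at hx
    rw [(hasDerivAt_entropy hn E x).deriv]
    have hZ := Zpos hn E x
    have hv := var_pos E hE x
    apply div_neg_of_neg_of_pos
    · exact mul_neg_of_pos_of_neg hx (by linarith)
    · positivity

lemma Zfun_shift {n : ℕ} (E : Fin n → ℝ) (c β : ℝ) :
    Zfun (fun i => E i - c) β = Real.exp (β * c) * Zfun E β := by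
  rw [Zfun, Zfun, Finset.mul_sum]
  apply Finset.sum_congr rfl
  intro i _
  rw [← Real.exp_add]
  ring_nf

lemma gibbsProb_shift {n : ℕ} (E : Fin n → ℝ) (c β : ℝ) (i : Fin n) :
    gibbsProb (fun i => E i - c) β i = gibbsProb E β i := by
  rw [gibbsProb, gibbsProb, Zfun_shift,
    show -β * (E i - c) = β * c + -β * E i by ring, Real.exp_add]
  rw [mul_div_mul_left _ _ (Real.exp_ne_zero _)]

lemma entropy_shift {n : ℕ} (E : Fin n → ℝ) (c β : ℝ) :
    gibbsEntropy (fun i => E i - c) β = gibbsEntropy E β := by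
  simp [gibbsEntropy, gibbsProb_shift]

lemma groundMult_eq {n : ℕ} (E : Fin n → ℝ) :
    (groundMult E : ℝ) = ((Finset.univ.filter (fun i => ∀ j, E i ≤ E j)).card : ℝ) := by
  rw [groundMult]
  congr 2
  ext i
  simp

lemma entropy_zero {n : ℕ} (hn : 0 < n) (E : Fin n → ℝ) :
    gibbsEntropy E 0 = Real.log n := by
  have hZ : Zfun E 0 = n := by simp [Zfun]
  have hn' : (n : ℝ) ≠ 0 := Nat.cast_ne_zero.mpr hn.ne'
  simp only [gibbsEntropy, gibbsProb, hZ, neg_zero, zero_mul, Real.exp_zero,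
    Finset.sum_const, Finset.card_univ, Fintype.card_fin, nsmul_eq_mul, one_div,
    Real.log_inv]
  field_simp

open Filter in
lemma tendsto_nonneg {n : ℕ} (hn : 0 < n) (F : Fin n → ℝ) (hF : ∀ i, 0 ≤ F i)
    (hex : ∃ i, F i = 0) :
    Tendsto (gibbsEntropy F) atTop
      (nhds (Real.log ((Finset.univ.filter (fun i => F i = 0)).card))) := by
  have : Nonempty (Fin n) := Fin.pos_iff_nonempty.mp hn
  set m : ℝ := ((Finset.univ.filter fun i => F i = 0).card : ℝ) with hm_def
  have hm : 0 < m := by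
    obtain ⟨i, hi⟩ := hex
    have : i ∈ Finset.univ.filter fun i => F i = 0 := by simp [hi]
    have := Finset.card_pos.mpr ⟨i, this⟩
    rw [hm_def]
    exact_mod_cast this
  have hZ : Tendsto (Zfun F) atTop (nhds m) := by
    have hmsum : m = ∑ i : Fin n, (if F i = 0 then (1:ℝ) else 0) := by
      rw [Finset.sum_boole]
    rw [hmsum]
    show Tendsto (fun β => ∑ i : Fin n, Real.exp (-β * F i)) atTop _
    apply tendsto_finset_sum
    intro i _
    by_cases h : F i = 0
    · simp only [h, mul_zero, Real.exp_zero, if_pos]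
      exact tendsto_const_nhds
    · simp only [h, if_neg, if_false]
      have ha : 0 < F i := lt_of_le_of_ne (hF i) (Ne.symm h)
      have h1 : Tendsto (fun β : ℝ => F i * β) atTop atTop :=
        Tendsto.const_mul_atTop ha tendsto_id
      have h2 : Tendsto (fun β : ℝ => -β * F i) atTop atBot := by
        have := tendsto_neg_atTop_atBot.comp h1
        apply this.congr
        intro β
        simp [mul_comm]
      exact Real.tendsto_exp_atBot.comp h2
  have hBW : Tendsto (fun β => β * Wfun F β) atTop (nhds 0) := by
    have heq : ∀ β : ℝ, (∑ i, β * (F i * Real.exp (-β * F i))) = β * Wfun F β := by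
      intro β; rw [Wfun, Finset.mul_sum]
    apply Tendsto.congr heq
    rw [show (0:ℝ) = ∑ _i : Fin n, (0:ℝ) by simp]
    apply tendsto_finset_sum
    intro i _
    by_cases h : F i = 0
    · simp only [h, zero_mul, mul_zero]
      exact tendsto_const_nhds
    · have ha : 0 < F i := lt_of_le_of_ne (hF i) (Ne.symm h)
      have h1 : Tendsto (fun β : ℝ => F i * β) atTop atTop :=
        Tendsto.const_mul_atTop ha tendsto_id
      have h2 := (Real.tendsto_pow_mul_exp_neg_atTop_nhds_zero 1).comp h1
      apply h2.congr
      intro β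
      simp only [Function.comp_apply, pow_one]
      rw [show -(F i * β) = -β * F i by ring]
      ring
  have hlogZ : Tendsto (fun β => Real.log (Zfun F β)) atTop (nhds (Real.log m)) :=
    (Real.continuousAt_log hm.ne').tendsto.comp hZ
  have hfrac : Tendsto (fun β => β * Wfun F β / Zfun F β) atTop (nhds 0) := by
    simpa [Pi.div_def] using hBW.div hZ hm.ne'
  have htot := hlogZ.add hfrac
  rw [add_zero] at htot
  apply htot.congr
  intro β
  rw [entropy_eq hn F β, mul_div_assoc]

open Filter in
lemma entropy_tendsto_atTop {n : ℕ} (hn : 0 < n) (E : Fin n → ℝ) :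
    Tendsto (gibbsEntropy E) atTop (nhds (Real.log (groundMult E))) := by
  have : Nonempty (Fin n) := Fin.pos_iff_nonempty.mp hn
  obtain ⟨i₀, -, hmin⟩ := Finset.exists_min_image Finset.univ E Finset.univ_nonempty
  set c := E i₀ with hc
  set F := fun i => E i - c with hF_def
  have hF : ∀ i, 0 ≤ F i := fun i => sub_nonneg.mpr (hmin i (Finset.mem_univ i))
  have hgr : ∀ i, (F i = 0) ↔ (∀ j, E i ≤ E j) := by
    intro i
    constructor
    · intro h j
      have : E i = c := by simpa [hF_def, sub_eq_zero] using h
      rw [this]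
      exact hmin j (Finset.mem_univ j)
    · intro h
      have h1 := h i₀
      have h2 := hmin i (Finset.mem_univ i)
      simp only [hF_def]
      linarith
  have hcard : Real.log (groundMult E)
      = Real.log ((Finset.univ.filter (fun i => F i = 0)).card) := by
    rw [groundMult_eq]
    congr 3
    apply Finset.filter_congr
    intro i _
    simp [hgr i]
  have hfun : gibbsEntropy E = gibbsEntropy F := by
    funext β
    exact (entropy_shift E c β).symm
  rw [hfun, hcard]
  exact tendsto_nonneg hn F hF ⟨i₀, by simp [hF_def, hc]⟩


/-- if `H` is not proportional to the identity (i.e. the spectrum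
`E` is non-constant), then `β ↦ S(ρ_β)` is strictly decreasing on `(0,∞)`, and
for every `s` strictly between `ln(ground-state multiplicity)` and `ln(dim H)`
there is a unique `β ∈ (0,∞)` with `S(ρ_β) = s` (existence and uniqueness of
the observational temperature). -/
theorem observational_temperature_exists_unique {n : ℕ} (hn : 0 < n)
    (E : Fin n → ℝ) (hE : ∃ i j, E i ≠ E j) :
    StrictAntiOn (gibbsEntropy E) (Set.Ioi 0) ∧
    ∀ s : ℝ, Real.log (groundMult E) < s → s < Real.log n →
      ∃! β : ℝ, β ∈ Set.Ioi (0:ℝ) ∧ gibbsEntropy E β = s := by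
  have hanti := entropy_strictAnti hn E hE
  refine ⟨hanti, ?_⟩
  intro s hs1 hs2
  have hcont : ∀ x : ℝ, ContinuousAt (gibbsEntropy E) x :=
    fun x => (hasDerivAt_entropy hn E x).differentiableAt.continuousAt
  -- find β₁ > 0 with s < S β₁
  have h0 : gibbsEntropy E 0 = Real.log n := entropy_zero hn E
  have hev : ∀ᶠ β in nhds (0:ℝ), s < gibbsEntropy E β := by
    apply (hcont 0).tendsto.eventually
    rw [h0]
    exact eventually_gt_nhds hs2
  have hev' : ∀ᶠ β in nhdsWithin (0:ℝ) (Set.Ioi 0),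
      s < gibbsEntropy E β ∧ β ∈ Set.Ioi (0:ℝ) :=
    (hev.filter_mono nhdsWithin_le_nhds).and eventually_mem_nhdsWithin
  obtain ⟨β₁, hβ₁s, hβ₁pos⟩ := hev'.exists
  -- find β₂ ≥ β₁ with S β₂ < s
  have hev2 : ∀ᶠ β in atTop, gibbsEntropy E β < s :=
    (entropy_tendsto_atTop hn E).eventually (eventually_lt_nhds hs1)
  obtain ⟨β₂, hβ₂ge, hβ₂s⟩ := (eventually_ge_atTop β₁).and hev2 |>.exists
  -- IVT
  have hcontOn : ContinuousOn (gibbsEntropy E) (Set.Icc β₁ β₂) :=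
    fun x _ => (hcont x).continuousWithinAt
  have hmem : s ∈ Set.Icc (gibbsEntropy E β₂) (gibbsEntropy E β₁) :=
    ⟨hβ₂s.le, hβ₁s.le⟩
  obtain ⟨β, hβmem, hβeq⟩ := intermediate_value_Icc' hβ₂ge hcontOn hmem
  have hβpos : β ∈ Set.Ioi (0:ℝ) := lt_of_lt_of_le hβ₁pos hβmem.1
  refine ⟨β, ⟨hβpos, hβeq⟩, ?_⟩
  intro y ⟨hy, hyeq⟩
  exact hanti.injOn hy hβpos (hyeq.trans hβeq.symm)
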